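/- Fix M > 0 and let I(s) = (1/(2πi)) ∫_{γ_M} exp(exp(−ζ²))/(s−ζ) dζ, and let F be the entire function with F(s) = I(s) off closure(D_M) and F(s) = exp(exp(−s²)) + I(s) on D_M. Then there exist constants C > 0 and Y > M such that |I(iy)| ≤ C·y for all y ≥ Y, and consequently F satisfies the growth condition: for every a > 0 and every ε > 0, limsup_{y→+∞} |F(iy)| / exp(a·e^{y/ε}) = +∞ (equivalently, for every c > 0 and every y₀ there exists y > y₀ with |F(iy)| > c·exp(a·e^{y/ε})). -/

import Mathlib

open MeasureTheory intervalIntegral Filter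

/-- The contour integral of `g` along the clockwise contour `γ_M`, consisting of the
right branch `{π/(2τ)+iτ : τ ≥ M}` traversed downward, the horizontal segment
`{σ+iM : |σ| ≤ π/(2M)}` traversed right to left, and the left branch
`{−π/(2τ)+iτ : τ ≥ M}` traversed upward. -/
noncomputable def gammaInt (M : ℝ) (g : ℂ → ℂ) : ℂ :=
  (∫ τ in Set.Ioi M, g (((-(Real.pi / (2 * τ)) : ℝ) : ℂ) + τ * Complex.I) *
      (((Real.pi / (2 * τ ^ 2) : ℝ) : ℂ) + Complex.I))
  - (∫ τ in Set.Ioi M, g (((Real.pi / (2 * τ) : ℝ) : ℂ) + τ * Complex.I) *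
      (Complex.I - ((Real.pi / (2 * τ ^ 2) : ℝ) : ℂ)))
  - ∫ σ in (-(Real.pi / (2 * M)))..(Real.pi / (2 * M)), g ((σ : ℂ) + M * Complex.I)

/-- Absolute convergence of the three parametrized Lebesgue integrals defining the
contour integral of `g` along `γ_M`. -/
def GammaIntegrable (M : ℝ) (g : ℂ → ℂ) : Prop :=
  MeasureTheory.IntegrableOn (fun τ : ℝ =>
    g (((-(Real.pi / (2 * τ)) : ℝ) : ℂ) + τ * Complex.I) *
      (((Real.pi / (2 * τ ^ 2) : ℝ) : ℂ) + Complex.I)) (Set.Ioi M) ∧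
  MeasureTheory.IntegrableOn (fun τ : ℝ =>
    g (((Real.pi / (2 * τ) : ℝ) : ℂ) + τ * Complex.I) *
      (Complex.I - ((Real.pi / (2 * τ ^ 2) : ℝ) : ℂ))) (Set.Ioi M) ∧
  IntervalIntegrable (fun σ : ℝ => g ((σ : ℂ) + M * Complex.I))
    MeasureTheory.volume (-(Real.pi / (2 * M))) (Real.pi / (2 * M))

/-- The trace (image) of the contour `γ_M`. -/
def gammaTrace (M : ℝ) : Set ℂ :=
  {ζ : ℂ | (M ≤ ζ.im ∧ |ζ.re| = Real.pi / (2 * ζ.im)) ∨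
    (ζ.im = M ∧ |ζ.re| ≤ Real.pi / (2 * M))}

/-- The open region `D_M` lying to the right of `γ_M` as it is traversed clockwise. -/
def DM (M : ℝ) : Set ℂ := {ζ : ℂ | M < ζ.im ∧ |ζ.re| < Real.pi / (2 * ζ.im)}

noncomputable def Abd (M : ℝ) : ℝ :=
  Real.exp ((Real.pi/(2*M))^2) * (2/Real.pi) * (Real.pi/(2*M^2)+1) * Real.exp 1

lemma exp_branch (σ τ : ℝ) (h : 2*σ*τ = Real.pi ∨ 2*σ*τ = -Real.pi) :
    Complex.exp (-((σ:ℂ) + τ*Complex.I)^2) = -(Real.exp (τ^2 - σ^2) : ℂ) := by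
  have harg : (-((σ:ℂ) + τ*Complex.I)^2) = ((τ^2-σ^2 : ℝ):ℂ) + ((-(2*σ*τ) : ℝ):ℂ)*Complex.I := by
    push_cast; ring_nf; rw [Complex.I_sq]; ring
  rw [harg, Complex.exp_add, Complex.exp_mul_I]
  rcases h with h | h <;> rw [h] <;>
    simp [← Complex.ofReal_cos, ← Complex.ofReal_sin, ← Complex.ofReal_neg,
      Real.cos_pi, Real.sin_pi] <;> push_cast <;> ring

lemma tau_exp (τ : ℝ) : τ * Real.exp (-τ^2) ≤ Real.exp 1 * Real.exp (-τ) := by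
  have h1 : τ ≤ Real.exp τ := by have := Real.add_one_le_exp τ; linarith
  calc τ * Real.exp (-τ^2) ≤ Real.exp τ * Real.exp (-τ^2) :=
        mul_le_mul_of_nonneg_right h1 (Real.exp_pos _).le
    _ = Real.exp (τ - τ^2) := by rw [← Real.exp_add]; ring_nf
    _ ≤ Real.exp (1 - τ) := Real.exp_le_exp.2 (by nlinarith [sq_nonneg (τ-1)])
    _ = Real.exp 1 * Real.exp (-τ) := by rw [← Real.exp_add]; ring_nf

lemma key_real (M τ : ℝ) (hM : 0 < M) (hτ : M ≤ τ) :
    Real.exp (-(Real.exp (τ^2 - (Real.pi/(2*τ))^2))) / (Real.pi/(2*τ)) * (Real.pi/(2*τ^2)+1)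
      ≤ Abd M * Real.exp (-τ) := by
  have hπ := Real.pi_pos
  have hτ0 : 0 < τ := hM.trans_le hτ
  have h1 : Real.exp (-(Real.exp (τ^2 - (Real.pi/(2*τ))^2)))
      ≤ Real.exp ((Real.pi/(2*M))^2) * Real.exp (-τ^2) := by
    rw [← Real.exp_add]
    apply Real.exp_le_exp.2
    have h2 : τ^2 - (Real.pi/(2*τ))^2 ≤ Real.exp (τ^2 - (Real.pi/(2*τ))^2) := by
      have := Real.add_one_le_exp (τ^2 - (Real.pi/(2*τ))^2); linarith
    have h3 : (Real.pi/(2*τ))^2 ≤ (Real.pi/(2*M))^2 := by gcongr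
    linarith
  calc Real.exp (-(Real.exp (τ^2 - (Real.pi/(2*τ))^2))) / (Real.pi/(2*τ)) * (Real.pi/(2*τ^2)+1)
      = Real.exp (-(Real.exp (τ^2 - (Real.pi/(2*τ))^2))) * (2*τ/Real.pi) * (Real.pi/(2*τ^2)+1) := by
        rw [div_div_eq_mul_div]; ring
    _ ≤ (Real.exp ((Real.pi/(2*M))^2) * Real.exp (-τ^2)) * (2*τ/Real.pi) * (Real.pi/(2*M^2)+1) := by
        gcongr
    _ = Real.exp ((Real.pi/(2*M))^2) * (2/Real.pi) * (Real.pi/(2*M^2)+1) * (τ * Real.exp (-τ^2)) := by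
        ring
    _ ≤ Real.exp ((Real.pi/(2*M))^2) * (2/Real.pi) * (Real.pi/(2*M^2)+1)
          * (Real.exp 1 * Real.exp (-τ)) :=
        mul_le_mul_of_nonneg_left (tau_exp τ) (by positivity)
    _ = Abd M * Real.exp (-τ) := by unfold Abd; ring

lemma branch_bound (M : ℝ) (hM : 0 < M) (y σ τ : ℝ) (hτ : M < τ)
    (hσ : σ = Real.pi/(2*τ) ∨ σ = -(Real.pi/(2*τ))) (m : ℂ)
    (hm : ‖m‖ ≤ Real.pi/(2*τ^2) + 1) :
    ‖Complex.exp (Complex.exp (-((σ:ℂ)+τ*Complex.I)^2))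
        / ((y:ℂ)*Complex.I - ((σ:ℂ)+τ*Complex.I)) * m‖
      ≤ Abd M * Real.exp (-τ) := by
  have hπ := Real.pi_pos
  have hτ0 : 0 < τ := hM.trans hτ
  have h2στ : 2*σ*τ = Real.pi ∨ 2*σ*τ = -Real.pi := by
    rcases hσ with h | h
    · left; rw [h]; field_simp
    · right; rw [h]; field_simp
  have habs1 : ‖Complex.exp (Complex.exp (-((σ:ℂ)+τ*Complex.I)^2))‖
      = Real.exp (-(Real.exp (τ^2 - σ^2))) := by
    rw [exp_branch σ τ h2στ, Complex.norm_exp, Complex.neg_re, Complex.ofReal_re]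
  have hσ2 : σ^2 = (Real.pi/(2*τ))^2 := by rcases hσ with h | h <;> rw [h] <;> ring
  have habs2 : Real.pi/(2*τ) ≤ ‖(y:ℂ)*Complex.I - ((σ:ℂ)+τ*Complex.I)‖ := by
    have hre : ((y:ℂ)*Complex.I - ((σ:ℂ)+τ*Complex.I)).re = -σ := by simp
    calc Real.pi/(2*τ) = |(-σ)| := by
          rcases hσ with h | h <;> rw [h] <;> simp [abs_of_nonneg, abs_of_nonpos,
            le_of_lt (div_pos hπ (by linarith : (0:ℝ) < 2*τ))]
      _ ≤ ‖_‖ := hre ▸ Complex.abs_re_le_norm _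
  rw [norm_mul, norm_div, habs1]
  calc Real.exp (-(Real.exp (τ^2 - σ^2))) / ‖(y:ℂ)*Complex.I - ((σ:ℂ)+τ*Complex.I)‖
        * ‖m‖
      ≤ Real.exp (-(Real.exp (τ^2 - σ^2))) / (Real.pi/(2*τ)) * (Real.pi/(2*τ^2)+1) := by
        gcongr
    _ = Real.exp (-(Real.exp (τ^2 - (Real.pi/(2*τ))^2))) / (Real.pi/(2*τ))
          * (Real.pi/(2*τ^2)+1) := by rw [hσ2]
    _ ≤ Abd M * Real.exp (-τ) := key_real M τ hM hτ.le

lemma seg_bound (M y σ : ℝ) (hy : M + 1 ≤ y) :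
    ‖Complex.exp (Complex.exp (-((σ:ℂ)+M*Complex.I)^2))
        / ((y:ℂ)*Complex.I - ((σ:ℂ)+M*Complex.I))‖
      ≤ Real.exp (Real.exp (M^2)) := by
  have harg : (-((σ:ℂ)+M*Complex.I)^2) = ((M^2-σ^2:ℝ):ℂ) + ((-(2*σ*M):ℝ):ℂ)*Complex.I := by
    push_cast; ring_nf; rw [Complex.I_sq]; ring
  have hnum : ‖Complex.exp (Complex.exp (-((σ:ℂ)+M*Complex.I)^2))‖
      ≤ Real.exp (Real.exp (M^2)) := by
    rw [Complex.norm_exp]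
    apply Real.exp_le_exp.2
    calc (Complex.exp (-((σ:ℂ)+M*Complex.I)^2)).re
        ≤ ‖Complex.exp (-((σ:ℂ)+M*Complex.I)^2)‖ := Complex.re_le_norm _
      _ = Real.exp ((-((σ:ℂ)+M*Complex.I)^2).re) := Complex.norm_exp _
      _ ≤ Real.exp (M^2) := by
          apply Real.exp_le_exp.2
          rw [harg]
          simp only [Complex.add_re, Complex.ofReal_re, Complex.mul_re, Complex.ofReal_im,
            Complex.I_re, Complex.I_im]
          nlinarith [sq_nonneg σ]
  have hden : 1 ≤ ‖(y:ℂ)*Complex.I - ((σ:ℂ)+M*Complex.I)‖ := by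
    have him : ((y:ℂ)*Complex.I - ((σ:ℂ)+M*Complex.I)).im = y - M := by simp
    calc (1:ℝ) ≤ |y - M| := by rw [abs_of_nonneg (by linarith)]; linarith
      _ ≤ ‖_‖ := him ▸ Complex.abs_im_le_norm _
  rw [norm_div]
  calc ‖Complex.exp (Complex.exp (-((σ:ℂ)+M*Complex.I)^2))‖
        / ‖(y:ℂ)*Complex.I - ((σ:ℂ)+M*Complex.I)‖
      ≤ ‖Complex.exp (Complex.exp (-((σ:ℂ)+M*Complex.I)^2))‖ / 1 := by gcongr
    _ = _ := div_one _
    _ ≤ Real.exp (Real.exp (M^2)) := hnum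

lemma grow (a ε c C y : ℝ) (ha : 0 < a) (hε : 0 < ε) (hc : 0 < c) (hC : 0 < C)
    (hy1 : 1 ≤ y) (hy2 : (1+1/ε) + (4+c+C+a) ≤ y) :
    c * Real.exp (a * Real.exp (y/ε)) + C*y < Real.exp (Real.exp (y^2)) := by
  have hxle : ∀ x : ℝ, x ≤ Real.exp x := fun x => by have := Real.add_one_le_exp x; linarith
  have e2 : (2:ℝ) ≤ Real.exp 1 := by have := Real.add_one_le_exp 1; linarith
  set u := a * Real.exp (y/ε) with hu
  have hu0 : 0 ≤ u := by positivity
  have hy0 : (0:ℝ) ≤ y := by linarith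
  have key : 2+c+C+a+y+y/ε < y^2 := by
    have f1 := mul_le_mul_of_nonneg_left hy2 hy0
    have f2 := mul_le_mul_of_nonneg_right hy1 (by positivity : (0:ℝ) ≤ 4+c+C+a)
    have hd : y/ε = y*(1/ε) := by ring
    nlinarith [f1, f2]
  have hule : u ≤ Real.exp (a + y/ε) := by
    rw [Real.exp_add]
    exact mul_le_mul_of_nonneg_right (hxle a) (Real.exp_pos _).le
  have hexpy : 1+c+C+u+y < Real.exp (y^2) := by
    have h1 : 1+c+C+y ≤ Real.exp (1+c+C+y) := hxle _
    have h2 : Real.exp (1+c+C+y) + Real.exp (a+y/ε) ≤ Real.exp (2+c+C+a+y+y/ε) := by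
      have g1 : Real.exp (1+c+C+y) ≤ Real.exp (1+c+C+a+y+y/ε) :=
        Real.exp_le_exp.2 (by
          have hd0 : 0 ≤ y/ε := by positivity
          linarith)
      have g2 : Real.exp (a+y/ε) ≤ Real.exp (1+c+C+a+y+y/ε) :=
        Real.exp_le_exp.2 (by linarith)
      calc Real.exp (1+c+C+y) + Real.exp (a+y/ε) ≤ 2 * Real.exp (1+c+C+a+y+y/ε) := by linarith
        _ ≤ Real.exp 1 * Real.exp (1+c+C+a+y+y/ε) :=
            mul_le_mul_of_nonneg_right e2 (Real.exp_pos _).le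
        _ = Real.exp (2+c+C+a+y+y/ε) := by rw [← Real.exp_add]; ring_nf
    have h3 : Real.exp (2+c+C+a+y+y/ε) < Real.exp (y^2) := Real.exp_lt_exp.2 key
    linarith
  have step1 : c * Real.exp u ≤ Real.exp (c+u) := by
    rw [Real.exp_add]; exact mul_le_mul_of_nonneg_right (hxle c) (Real.exp_pos _).le
  have step2 : C*y ≤ Real.exp (C+y) := by
    rw [Real.exp_add]
    exact mul_le_mul (hxle C) (hxle y) hy0 (Real.exp_pos _).le
  have step3 : Real.exp (c+u) + Real.exp (C+y) ≤ Real.exp (1+(c+C+u+y)) := by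
    have g1 : Real.exp (c+u) ≤ Real.exp (c+C+u+y) := Real.exp_le_exp.2 (by linarith)
    have g2 : Real.exp (C+y) ≤ Real.exp (c+C+u+y) := Real.exp_le_exp.2 (by linarith)
    calc Real.exp (c+u) + Real.exp (C+y) ≤ 2 * Real.exp (c+C+u+y) := by linarith
      _ ≤ Real.exp 1 * Real.exp (c+C+u+y) := mul_le_mul_of_nonneg_right e2 (Real.exp_pos _).le
      _ = Real.exp (1+(c+C+u+y)) := by rw [← Real.exp_add]
  have step4 : Real.exp (1+(c+C+u+y)) < Real.exp (Real.exp (y^2)) :=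
    Real.exp_lt_exp.2 (by linarith)
  linarith

lemma main_bound (M : ℝ) (hM : 0 < M) (y : ℝ) (hy : M+1 ≤ y) :
    ‖gammaInt M (fun ζ : ℂ =>
        Complex.exp (Complex.exp (-ζ^2)) / ((y:ℂ)*Complex.I - ζ))‖
      ≤ 2*Abd M + Real.exp (Real.exp (M^2)) * (Real.pi/M) := by
  have hπ := Real.pi_pos
  have hIntg : MeasureTheory.IntegrableOn (fun τ : ℝ => Abd M * Real.exp (-τ)) (Set.Ioi M) := by
    have h := (exp_neg_integrableOn_Ioi M zero_lt_one).const_mul (Abd M)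
    simpa [IntegrableOn] using h
  have hval : ∫ τ in Set.Ioi M, Abd M * Real.exp (-τ) = Abd M * Real.exp (-M) := by
    rw [MeasureTheory.integral_const_mul, integral_exp_neg_Ioi]
  have h1 : ‖∫ τ in Set.Ioi M,
      (fun ζ : ℂ => Complex.exp (Complex.exp (-ζ^2)) / ((y:ℂ)*Complex.I - ζ))
        (((-(Real.pi / (2 * τ)) : ℝ) : ℂ) + τ * Complex.I) *
        (((Real.pi / (2 * τ ^ 2) : ℝ) : ℂ) + Complex.I)‖ ≤ Abd M * Real.exp (-M) := by
    rw [← hval]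
    apply MeasureTheory.norm_integral_le_of_norm_le hIntg
    rw [MeasureTheory.ae_restrict_iff' measurableSet_Ioi]
    filter_upwards with τ
    intro hτ
    have hm : ‖((Real.pi / (2 * τ ^ 2) : ℝ) : ℂ) + Complex.I‖
        ≤ Real.pi/(2*τ^2) + 1 := by
      calc ‖_‖
          ≤ ‖((Real.pi / (2 * τ ^ 2) : ℝ) : ℂ)‖ + ‖Complex.I‖ :=
            norm_add_le _ _
        _ = |Real.pi/(2*τ^2)| + 1 := by rw [Complex.norm_real, Real.norm_eq_abs, Complex.norm_I]
        _ = Real.pi/(2*τ^2) + 1 := by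
            rw [abs_of_nonneg (div_nonneg hπ.le (by positivity))]
    simpa using branch_bound M hM y _ τ hτ (Or.inr rfl) _ hm
  have h2 : ‖∫ τ in Set.Ioi M,
      (fun ζ : ℂ => Complex.exp (Complex.exp (-ζ^2)) / ((y:ℂ)*Complex.I - ζ))
        (((Real.pi / (2 * τ) : ℝ) : ℂ) + τ * Complex.I) *
        (Complex.I - ((Real.pi / (2 * τ ^ 2) : ℝ) : ℂ))‖ ≤ Abd M * Real.exp (-M) := by
    rw [← hval]
    apply MeasureTheory.norm_integral_le_of_norm_le hIntg
    rw [MeasureTheory.ae_restrict_iff' measurableSet_Ioi]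
    filter_upwards with τ
    intro hτ
    have hm : ‖Complex.I - ((Real.pi / (2 * τ ^ 2) : ℝ) : ℂ)‖
        ≤ Real.pi/(2*τ^2) + 1 := by
      have h := norm_sub_le (Complex.I) (((Real.pi / (2 * τ ^ 2) : ℝ) : ℂ))
      simp only [Complex.norm_I, Complex.norm_real, Real.norm_eq_abs] at h
      rw [abs_of_nonneg (div_nonneg hπ.le (by positivity))] at h
      linarith
    simpa using branch_bound M hM y _ τ hτ (Or.inl rfl) _ hm
  have h3 : ‖∫ σ in (-(Real.pi/(2*M)))..(Real.pi/(2*M)),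
      (fun ζ : ℂ => Complex.exp (Complex.exp (-ζ^2)) / ((y:ℂ)*Complex.I - ζ))
        ((σ:ℂ) + M*Complex.I)‖
      ≤ Real.exp (Real.exp (M^2)) * |Real.pi/(2*M) - (-(Real.pi/(2*M)))| :=
    intervalIntegral.norm_integral_le_of_norm_le_const (fun σ _ => by
      simpa using seg_bound M y σ hy)
  have habs : |Real.pi/(2*M) - (-(Real.pi/(2*M)))| = Real.pi/M := by
    rw [sub_neg_eq_add, abs_of_nonneg (by positivity)]
    field_simp
    ring
  rw [habs] at h3
  have hexpM : Real.exp (-M) ≤ 1 := Real.exp_le_one_iff.2 (by linarith)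
  have hA : 0 < Abd M := by unfold Abd; positivity
  calc ‖gammaInt M (fun ζ : ℂ =>
        Complex.exp (Complex.exp (-ζ^2)) / ((y:ℂ)*Complex.I - ζ))‖
      = ‖(∫ τ in Set.Ioi M,
          (fun ζ : ℂ => Complex.exp (Complex.exp (-ζ^2)) / ((y:ℂ)*Complex.I - ζ))
            (((-(Real.pi / (2 * τ)) : ℝ) : ℂ) + τ * Complex.I) *
            (((Real.pi / (2 * τ ^ 2) : ℝ) : ℂ) + Complex.I))
        - (∫ τ in Set.Ioi M,
          (fun ζ : ℂ => Complex.exp (Complex.exp (-ζ^2)) / ((y:ℂ)*Complex.I - ζ))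
            (((Real.pi / (2 * τ) : ℝ) : ℂ) + τ * Complex.I) *
            (Complex.I - ((Real.pi / (2 * τ ^ 2) : ℝ) : ℂ)))
        - ∫ σ in (-(Real.pi/(2*M)))..(Real.pi/(2*M)),
          (fun ζ : ℂ => Complex.exp (Complex.exp (-ζ^2)) / ((y:ℂ)*Complex.I - ζ))
            ((σ:ℂ) + M*Complex.I)‖ := rfl
    _ ≤ _ := by
        have t1 := norm_sub_le ((∫ τ in Set.Ioi M,
          (fun ζ : ℂ => Complex.exp (Complex.exp (-ζ^2)) / ((y:ℂ)*Complex.I - ζ))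
            (((-(Real.pi / (2 * τ)) : ℝ) : ℂ) + τ * Complex.I) *
            (((Real.pi / (2 * τ ^ 2) : ℝ) : ℂ) + Complex.I))
        - (∫ τ in Set.Ioi M,
          (fun ζ : ℂ => Complex.exp (Complex.exp (-ζ^2)) / ((y:ℂ)*Complex.I - ζ))
            (((Real.pi / (2 * τ) : ℝ) : ℂ) + τ * Complex.I) *
            (Complex.I - ((Real.pi / (2 * τ ^ 2) : ℝ) : ℂ))))
          (∫ σ in (-(Real.pi/(2*M)))..(Real.pi/(2*M)),
          (fun ζ : ℂ => Complex.exp (Complex.exp (-ζ^2)) / ((y:ℂ)*Complex.I - ζ))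
            ((σ:ℂ) + M*Complex.I))
        have t2 := norm_sub_le (∫ τ in Set.Ioi M,
          (fun ζ : ℂ => Complex.exp (Complex.exp (-ζ^2)) / ((y:ℂ)*Complex.I - ζ))
            (((-(Real.pi / (2 * τ)) : ℝ) : ℂ) + τ * Complex.I) *
            (((Real.pi / (2 * τ ^ 2) : ℝ) : ℂ) + Complex.I))
          (∫ τ in Set.Ioi M,
          (fun ζ : ℂ => Complex.exp (Complex.exp (-ζ^2)) / ((y:ℂ)*Complex.I - ζ))
            (((Real.pi / (2 * τ) : ℝ) : ℂ) + τ * Complex.I) *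
            (Complex.I - ((Real.pi / (2 * τ ^ 2) : ℝ) : ℂ)))
        have hAe : Abd M * Real.exp (-M) ≤ Abd M * 1 := by
          exact mul_le_mul_of_nonneg_left hexpM hA.le
        nlinarith [h1, h2, h3, Real.exp_pos (Real.exp (M^2)), mul_pos hπ hM]

theorem statement15 (M : ℝ) (hM : 0 < M) (F : ℂ → ℂ) (hF : Differentiable ℂ F)
    (hFoff : ∀ s : ℂ, s ∉ closure (DM M) →
      F s = (1 / (2 * Real.pi * Complex.I)) *
        gammaInt M (fun ζ : ℂ => Complex.exp (Complex.exp (-ζ ^ 2)) / (s - ζ)))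
    (hFon : ∀ s ∈ DM M,
      F s = Complex.exp (Complex.exp (-s ^ 2)) + (1 / (2 * Real.pi * Complex.I)) *
        gammaInt M (fun ζ : ℂ => Complex.exp (Complex.exp (-ζ ^ 2)) / (s - ζ))) :
    (∃ C : ℝ, 0 < C ∧ ∃ Y : ℝ, M < Y ∧ ∀ y : ℝ, Y ≤ y →
      ‖(1 / (2 * Real.pi * Complex.I)) *
        gammaInt M (fun ζ : ℂ => Complex.exp (Complex.exp (-ζ ^ 2)) / ((y : ℂ) * Complex.I - ζ))‖
        ≤ C * y) ∧
    ∀ a ε c : ℝ, 0 < a → 0 < ε → 0 < c → ∀ y₀ : ℝ, ∃ y : ℝ, y₀ < y ∧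
      c * Real.exp (a * Real.exp (y / ε)) < ‖F ((y : ℂ) * Complex.I)‖ := by
  have hπ := Real.pi_pos
  have hA : 0 < Abd M := by unfold Abd; positivity
  set C₀ : ℝ := 2*Abd M + Real.exp (Real.exp (M^2)) * (Real.pi/M) + 1 with hC₀
  have hC₀pos : 0 < C₀ := by rw [hC₀]; positivity
  have hz1 : ‖1/(2*(Real.pi:ℂ)*Complex.I)‖ ≤ 1 := by
    have hd : ‖2*(Real.pi:ℂ)*Complex.I‖ = 2*Real.pi := by
      rw [norm_mul, norm_mul, Complex.norm_two, Complex.norm_real, Real.norm_eq_abs, Complex.norm_I,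
        abs_of_nonneg Real.pi_pos.le, mul_one]
    rw [norm_div, norm_one, hd, div_le_one (by positivity)]
    linarith [Real.pi_gt_three]
  have hbound : ∀ y : ℝ, M+1 ≤ y →
      ‖(1 / (2 * Real.pi * Complex.I)) *
        gammaInt M (fun ζ : ℂ =>
          Complex.exp (Complex.exp (-ζ ^ 2)) / ((y : ℂ) * Complex.I - ζ))‖ ≤ C₀ * y := by
    intro y hy
    have h1y : (1:ℝ) ≤ y := by linarith
    calc ‖(1 / (2 * Real.pi * Complex.I)) *
          gammaInt M (fun ζ : ℂ =>
            Complex.exp (Complex.exp (-ζ ^ 2)) / ((y : ℂ) * Complex.I - ζ))‖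
        = ‖1/(2*(Real.pi:ℂ)*Complex.I)‖ *
          ‖gammaInt M (fun ζ : ℂ =>
            Complex.exp (Complex.exp (-ζ ^ 2)) / ((y : ℂ) * Complex.I - ζ))‖ := norm_mul _ _
      _ ≤ 1 * (2*Abd M + Real.exp (Real.exp (M^2)) * (Real.pi/M)) := by
          apply mul_le_mul hz1 (main_bound M hM y hy) (norm_nonneg _) zero_le_one
      _ = 2*Abd M + Real.exp (Real.exp (M^2)) * (Real.pi/M) := one_mul _
      _ ≤ C₀ * 1 := by rw [hC₀]; nlinarith
      _ ≤ C₀ * y := by nlinarith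
  constructor
  · exact ⟨C₀, hC₀pos, M+1, by linarith, hbound⟩
  · intro a ε c ha hε hc y₀
    set y : ℝ := max (y₀+1) (max (M+1) (max 1 ((1+1/ε) + (4+c+C₀+a)))) with hydef
    have hy0 : y₀ < y := lt_of_lt_of_le (by linarith) (le_max_left _ _)
    have hyM : M+1 ≤ y := le_trans (le_max_left _ _) (le_max_right _ _)
    have hy1 : (1:ℝ) ≤ y :=
      le_trans (le_trans (le_max_left _ _) (le_max_right _ _)) (le_max_right _ _)
    have hy2 : (1+1/ε) + (4+c+C₀+a) ≤ y :=
      le_trans (le_trans (le_max_right _ _) (le_max_right _ _)) (le_max_right _ _)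
    refine ⟨y, hy0, ?_⟩
    have hmem : (y:ℂ)*Complex.I ∈ DM M := by
      have him : ((y:ℂ)*Complex.I).im = y := by simp
      have hre : ((y:ℂ)*Complex.I).re = 0 := by simp
      simp only [DM, Set.mem_setOf_eq, him, hre, abs_zero]
      refine ⟨by linarith, div_pos hπ (by linarith)⟩
    rw [hFon _ hmem]
    have hsq : -(((y:ℂ)*Complex.I)^2) = ((y^2 : ℝ):ℂ) := by
      push_cast; ring_nf; rw [Complex.I_sq]; ring
    rw [hsq, ← Complex.ofReal_exp, ← Complex.ofReal_exp]
    set E : ℝ := Real.exp (Real.exp (y^2)) with hE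
    set J : ℂ := (1 / (2 * Real.pi * Complex.I)) *
        gammaInt M (fun ζ : ℂ =>
          Complex.exp (Complex.exp (-ζ ^ 2)) / ((y : ℂ) * Complex.I - ζ)) with hJ
    have hJb : ‖J‖ ≤ C₀ * y := hbound y hyM
    have hEabs : ‖(E:ℂ)‖ = E := by
      rw [Complex.norm_real, Real.norm_eq_abs, abs_of_pos (Real.exp_pos _)]
    have htri : E - ‖J‖ ≤ ‖(E:ℂ) + J‖ := by
      have h2 : ‖(E:ℂ)‖ ≤ ‖(E:ℂ)+J‖ + ‖J‖ := by
        calc ‖(E:ℂ)‖ = ‖((E:ℂ)+J) + (-J)‖ := by congr 1; ring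
          _ ≤ ‖(E:ℂ)+J‖ + ‖-J‖ := norm_add_le _ _
          _ = ‖(E:ℂ)+J‖ + ‖J‖ := by rw [norm_neg]
      linarith [hEabs ▸ h2]
    have hgrow := grow a ε c C₀ y ha hε hc hC₀pos hy1 hy2
    rw [← hE] at hgrow
    show c * Real.exp (a * Real.exp (y / ε)) < ‖(E:ℂ) + J‖
    clear_value E J y C₀
    linarith
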